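/- For every probability measure μ and all such f, g, one has (cov_μ(f², g))² ≤ 8 · μ(f²) · μ[(f − μ(f))² · (g² + μ(g²))]. -/

import Mathlib

open MeasureTheory

/-- Cauchy–Schwarz inequality for integrals of real functions. -/
lemma cs_integral {α : Type*} [MeasurableSpace α] {μ : Measure α} {u v : α → ℝ}
    (hum : AEStronglyMeasurable u μ) (hvm : AEStronglyMeasurable v μ)
    (hu2 : Integrable (fun x => u x ^ 2) μ) (hv2 : Integrable (fun x => v x ^ 2) μ) :
    (∫ x, u x * v x ∂μ) ^ 2 ≤ (∫ x, u x ^ 2 ∂μ) * ∫ x, v x ^ 2 ∂μ := by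
  have hA : 0 ≤ ∫ x, u x ^ 2 ∂μ := integral_nonneg fun x => sq_nonneg _
  have hB : 0 ≤ ∫ x, v x ^ 2 ∂μ := integral_nonneg fun x => sq_nonneg _
  have hu : MemLp u 2 μ := (memLp_two_iff_integrable_sq hum).2 hu2
  have hv : MemLp v 2 μ := (memLp_two_iff_integrable_sq hvm).2 hv2
  have h2 : (ENNReal.ofReal (2:ℝ)) = 2 := by norm_num
  have key := integral_mul_norm_le_Lp_mul_Lq (μ := μ) (f := u) (g := v)
    (Real.HolderConjugate.two_two : Real.HolderConjugate 2 2) (by rw [h2]; exact hu)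
    (by rw [h2]; exact hv)
  have hrw : ∀ w : α → ℝ, (∫ a, ‖w a‖ ^ (2:ℝ) ∂μ) = ∫ a, w a ^ 2 ∂μ := by
    intro w
    refine integral_congr_ae (Filter.Eventually.of_forall fun x => ?_)
    have : ‖w x‖ ^ (2:ℝ) = w x ^ 2 := by
      rw [Real.norm_eq_abs, show (2:ℝ) = ((2:ℕ):ℝ) by norm_num, Real.rpow_natCast, sq_abs]
    exact this
  rw [hrw u, hrw v] at key
  have habs : |∫ x, u x * v x ∂μ| ≤ ∫ a, ‖u a‖ * ‖v a‖ ∂μ := by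
    rw [← Real.norm_eq_abs]
    refine (norm_integral_le_integral_norm (fun x => u x * v x)).trans ?_
    refine le_of_eq (integral_congr_ae (Filter.Eventually.of_forall fun x => ?_))
    simp [abs_mul]
  have hfin : |∫ x, u x * v x ∂μ| ≤
      (∫ x, u x ^ 2 ∂μ) ^ ((1:ℝ)/2) * (∫ x, v x ^ 2 ∂μ) ^ ((1:ℝ)/2) := habs.trans key
  have hsq := pow_le_pow_left₀ (abs_nonneg _) hfin 2
  rw [sq_abs] at hsq
  refine hsq.trans (le_of_eq ?_)
  rw [mul_pow, ← Real.rpow_natCast ((∫ x, u x ^ 2 ∂μ) ^ ((1:ℝ)/2)) 2,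
    ← Real.rpow_natCast ((∫ x, v x ^ 2 ∂μ) ^ ((1:ℝ)/2)) 2,
    ← Real.rpow_mul hA, ← Real.rpow_mul hB]
  norm_num

/-- covariance inequality of [Pa1], used in Lemma 6.1 of the paper:
for a probability measure `μ`,
`(cov_μ(f², g))² ≤ 8 μ(f²) μ[(f - μ f)² (g² + μ g²)]`. -/
theorem covariance_square_bound {α : Type*} [MeasurableSpace α]
    (μ : Measure α) [IsProbabilityMeasure μ] (f g : α → ℝ)
    (hf : Integrable f μ) (hf2 : Integrable (fun x => f x ^ 2) μ)
    (hg : Integrable g μ) (hg2 : Integrable (fun x => g x ^ 2) μ)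
    (hf2g : Integrable (fun x => f x ^ 2 * g x) μ)
    (hmix : Integrable
      (fun x => (f x - ∫ y, f y ∂μ) ^ 2 * (g x ^ 2 + ∫ y, g y ^ 2 ∂μ)) μ) :
    ((∫ x, f x ^ 2 * g x ∂μ) - (∫ x, f x ^ 2 ∂μ) * ∫ x, g x ∂μ) ^ 2 ≤
      8 * (∫ x, f x ^ 2 ∂μ) *
        ∫ x, (f x - ∫ y, f y ∂μ) ^ 2 * (g x ^ 2 + ∫ y, g y ^ 2 ∂μ) ∂μ := by
  set m := ∫ y, f y ∂μ with hm
  set c := ∫ y, g y ∂μ with hc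
  set s := ∫ y, g y ^ 2 ∂μ with hs
  set A := ∫ x, f x ^ 2 ∂μ with hA
  set V := ∫ x, (f x - m) ^ 2 * (g x ^ 2 + s) ∂μ with hV
  have hA0 : 0 ≤ A := integral_nonneg fun x => sq_nonneg _
  have hV0 : 0 ≤ V := integral_nonneg fun x => by positivity
  have hone : Integrable (fun _ : α => (1:ℝ) ^ 2) μ := by simp
  have hm2 : m ^ 2 ≤ A := by
    have := cs_integral hf.1 aestronglyMeasurable_const hf2 hone
    simpa [hm, hA] using this
  have hc2 : c ^ 2 ≤ s := by
    have := cs_integral hg.1 aestronglyMeasurable_const hg2 hone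
    simpa [hc, hs] using this
  -- integrability facts
  have hIc : Integrable (fun x => 2 * m * f x) μ := by exact hf.const_mul _
  have hI3 : Integrable (fun x => 2 * m * f x + m ^ 2) μ := by
    exact hIc.add (integrable_const _)
  have hu2 : Integrable (fun x => (f x + m) ^ 2) μ := by
    have h : (fun x => (f x + m) ^ 2) = fun x => f x ^ 2 + (2 * m * f x + m ^ 2) := by
      funext x; ring
    rw [h]; exact hf2.add hI3
  have humeas : AEStronglyMeasurable (fun x => f x + m) μ := by
    exact hf.1.add aestronglyMeasurable_const
  have hvmeas : AEStronglyMeasurable (fun x => (f x - m) * (g x - c)) μ := by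
    exact (hf.1.sub aestronglyMeasurable_const).mul (hg.1.sub aestronglyMeasurable_const)
  have hbound : ∀ x, ((f x - m) * (g x - c)) ^ 2 ≤ 2 * ((f x - m) ^ 2 * (g x ^ 2 + s)) := by
    intro x
    nlinarith [mul_nonneg (sq_nonneg (f x - m)) (sq_nonneg (g x + c)),
      mul_nonneg (sq_nonneg (f x - m)) (sub_nonneg.2 hc2)]
  have hv2 : Integrable (fun x => ((f x - m) * (g x - c)) ^ 2) μ := by
    refine Integrable.mono' (hmix.const_mul 2) ?_ (Filter.Eventually.of_forall fun x => ?_)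
    · exact (hvmeas.mul hvmeas).congr (Filter.Eventually.of_forall fun x => by
        simp only [Pi.mul_apply]; ring)
    · rw [Real.norm_eq_abs, abs_of_nonneg (sq_nonneg _)]
      exact hbound x
  -- Cauchy-Schwarz
  have hcs := cs_integral humeas hvmeas hu2 hv2
  -- identify the covariance
  have hI1 : Integrable (fun x => f x ^ 2 * g x - c * f x ^ 2) μ := by
    exact hf2g.sub (hf2.const_mul c)
  have hI2 : Integrable (fun x => m ^ 2 * g x - m ^ 2 * c) μ := by
    exact (hg.const_mul _).sub (integrable_const _)
  have hid : (∫ x, (f x + m) * ((f x - m) * (g x - c)) ∂μ)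
      = (∫ x, f x ^ 2 * g x ∂μ) - A * c := by
    have h : (fun x => (f x + m) * ((f x - m) * (g x - c)))
        = fun x => (f x ^ 2 * g x - c * f x ^ 2) - (m ^ 2 * g x - m ^ 2 * c) := by
      funext x; ring
    rw [h, integral_sub hI1 hI2,
      integral_sub hf2g (hf2.const_mul c),
      integral_sub (hg.const_mul _) (integrable_const _),
      integral_const_mul, integral_const_mul, integral_const]
    simp only [measure_univ, probReal_univ, ENNReal.toReal_one, one_smul, ← hc, ← hA]
    ring
  -- bound the two factors
  have hu2val : (∫ x, (f x + m) ^ 2 ∂μ) ≤ 4 * A := by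
    have h : (fun x => (f x + m) ^ 2) = fun x => f x ^ 2 + (2 * m * f x + m ^ 2) := by
      funext x; ring
    rw [h, integral_add hf2 hI3, integral_add hIc (integrable_const _),
      integral_const_mul, integral_const]
    simp only [measure_univ, probReal_univ, ENNReal.toReal_one, one_smul, ← hm, ← hA]
    nlinarith [hm2]
  have hv2val : (∫ x, ((f x - m) * (g x - c)) ^ 2 ∂μ) ≤ 2 * V := by
    have h := integral_mono hv2 (hmix.const_mul 2) fun x => hbound x
    rwa [integral_const_mul] at h
  have hu2nn : 0 ≤ ∫ x, (f x + m) ^ 2 ∂μ := integral_nonneg fun x => sq_nonneg _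
  have hv2nn : 0 ≤ ∫ x, ((f x - m) * (g x - c)) ^ 2 ∂μ := integral_nonneg fun x => sq_nonneg _
  rw [hid] at hcs
  nlinarith [hcs, mul_le_mul hu2val hv2val hv2nn (by linarith : (0:ℝ) ≤ 4 * A)]
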